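/- Let H be a self-adjoint operator on a finite-dimensional Hilbert space, E ∈ ℝ, η > 0, and J = [E−η, E+η]. Then (tr χ_J(H))² − tr χ_J(H) ≤ (2η)² [ (tr Im R)² − tr((Im R)²) ], where R = (H − (E+iη))⁻¹ and Im R = (R − R*)/(2i). -/

import Mathlib

open Matrix Complex

/-- For a Hermitian matrix `H` on a finite-dimensional Hilbert space ℂⁿ,
with `J = [E-η, E+η]`, the number of eigenvalues in `J` (with multiplicity), i.e.
`tr χ_J(H)`, satisfies `(tr χ_J(H))² - tr χ_J(H) ≤ (2η)² [(tr Im R)² - tr((Im R)²)]`,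
where `R = (H - (E+iη))⁻¹` and `Im R = (R - R*)/(2i)`. -/
theorem stmt_2 {n : Type*} [Fintype n] [DecidableEq n]
    (H : Matrix n n ℂ) (hH : H.IsHermitian) (E η : ℝ) (hη : 0 < η)
    (R ImR : Matrix n n ℂ)
    (hR : R = (H - ((E : ℂ) + (η : ℂ) * Complex.I) • (1 : Matrix n n ℂ))⁻¹)
    (hImR : ImR = (2 * Complex.I)⁻¹ • (R - Rᴴ))
    (N : ℕ)
    (hN : N = (Finset.univ.filter
      (fun i => hH.eigenvalues i ∈ Set.Icc (E - η) (E + η))).card) :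
    (N : ℝ) ^ 2 - (N : ℝ) ≤
      (2 * η) ^ 2 * (((ImR.trace).re) ^ 2 - ((ImR * ImR).trace).re) := by
  classical
  set z : ℂ := (E : ℂ) + (η : ℂ) * Complex.I with hz
  set U : Matrix n n ℂ := (hH.eigenvectorUnitary : Matrix n n ℂ) with hU
  have hUU : U * star U = 1 := (Matrix.mem_unitaryGroup_iff).mp hH.eigenvectorUnitary.2
  have hUU' : star U * U = 1 := (Matrix.mem_unitaryGroup_iff').mp hH.eigenvectorUnitary.2
  set lam : n → ℝ := hH.eigenvalues with hlam
  -- conjugation lemmas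
  have conj_mul : ∀ D1 D2 : Matrix n n ℂ,
      (U * D1 * star U) * (U * D2 * star U) = U * (D1 * D2) * star U := by
    intro D1 D2
    calc (U * D1 * star U) * (U * D2 * star U)
        = U * D1 * ((star U * U) * (D2 * star U)) := by
          simp only [Matrix.mul_assoc]
      _ = U * (D1 * D2) * star U := by
          rw [hUU', one_mul]
          simp only [Matrix.mul_assoc]
  have trace_conj : ∀ D : Matrix n n ℂ, (U * D * star U).trace = D.trace := by
    intro D
    rw [Matrix.trace_mul_comm, ← Matrix.mul_assoc, hUU', one_mul]
  -- nonvanishing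
  have ha : ∀ i, ((lam i : ℂ) - z) ≠ 0 := by
    intro i h
    have him : ((lam i : ℂ) - z).im = 0 := by rw [h]; simp
    simp [hz] at him
    exact absurd him hη.ne'
  -- H - z • 1 in diagonal form
  have hHz : H - z • (1 : Matrix n n ℂ)
      = U * diagonal (fun i => (lam i : ℂ) - z) * star U := by
    have h1 : z • (1 : Matrix n n ℂ) = U * (z • (1 : Matrix n n ℂ)) * star U := by
      rw [Matrix.mul_smul, Matrix.mul_one, Matrix.smul_mul, hUU]
    have h2 : z • (1 : Matrix n n ℂ) = diagonal (fun _ : n => z) := by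
      ext i j
      by_cases h : i = j <;> simp [h, Matrix.one_apply, Matrix.diagonal_apply]
    conv_lhs => rw [hH.spectral_theorem, Unitary.conjStarAlgAut_apply, h1]
    rw [← Matrix.sub_mul, ← Matrix.mul_sub, h2, Matrix.diagonal_sub]
    rfl
  -- R in diagonal form
  have hRdiag : R = U * diagonal (fun i => ((lam i : ℂ) - z)⁻¹) * star U := by
    rw [hR, hHz]
    apply Matrix.inv_eq_right_inv
    rw [conj_mul, Matrix.diagonal_mul_diagonal]
    have : (fun i => ((lam i : ℂ) - z) * ((lam i : ℂ) - z)⁻¹) = fun _ : n => (1 : ℂ) :=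
      funext fun i => mul_inv_cancel₀ (ha i)
    rw [this, Matrix.diagonal_one, Matrix.mul_one, hUU]
  have hRH : Rᴴ = U * diagonal (fun i => star (((lam i : ℂ) - z)⁻¹)) * star U := by
    rw [hRdiag]
    rw [Matrix.conjTranspose_mul, Matrix.conjTranspose_mul, Matrix.diagonal_conjTranspose]
    simp only [Matrix.star_eq_conjTranspose, Matrix.conjTranspose_conjTranspose]
    simp only [Matrix.mul_assoc]
    rfl
  -- Im R in diagonal form with real entries
  set f : n → ℝ := fun i => η / ((lam i - E) ^ 2 + η ^ 2) with hf
  have hImRdiag : ImR = U * diagonal (fun i => ((f i : ℝ) : ℂ)) * star U := by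
    rw [hImR, hRH, hRdiag, ← Matrix.sub_mul, ← Matrix.mul_sub, Matrix.diagonal_sub]
    rw [← Matrix.smul_mul, ← Matrix.mul_smul, ← Matrix.diagonal_smul]
    have entry : ((2 * Complex.I)⁻¹ • fun i => ((lam i : ℂ) - z)⁻¹ - star (((lam i : ℂ) - z)⁻¹))
        = fun i => ((f i : ℝ) : ℂ) := by
      funext i
      set w : ℂ := ((lam i : ℂ) - z)⁻¹ with hw
      have h0 : ((2 * Complex.I)⁻¹ • fun i => ((lam i : ℂ) - z)⁻¹
          - star (((lam i : ℂ) - z)⁻¹)) i = ((w.im : ℝ) : ℂ) := by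
        simp only [Pi.smul_apply, smul_eq_mul, ← hw, RCLike.star_def]
        rw [Complex.im_eq_sub_conj]
        ring
      rw [h0]
      congr 1
      have h1 : w.im = η / (((lam i : ℂ) - z).re ^ 2 + ((lam i : ℂ) - z).im ^ 2) := by
        rw [hw, Complex.inv_im]
        have : ((lam i : ℂ) - z).im = -η := by simp [hz]
        rw [Complex.normSq_apply, this]
        ring
      rw [h1]
      have h2 : ((lam i : ℂ) - z).re = lam i - E := by simp [hz]
      have h3 : ((lam i : ℂ) - z).im = -η := by simp [hz]
      rw [h2, h3, hf]
      ring_nf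
    rw [entry]
  -- traces
  have t1 : ImR.trace = ((∑ i, f i : ℝ) : ℂ) := by
    rw [hImRdiag, trace_conj, Matrix.trace_diagonal]
    push_cast
    rfl
  have t2 : (ImR * ImR).trace = ((∑ i, (f i) ^ 2 : ℝ) : ℂ) := by
    rw [hImRdiag, conj_mul, Matrix.diagonal_mul_diagonal, trace_conj, Matrix.trace_diagonal]
    push_cast
    simp [sq]
  rw [t1, t2, Complex.ofReal_re, Complex.ofReal_re]
  -- now a purely real inequality
  have hfpos : ∀ i, 0 < f i := by
    intro i
    apply div_pos hη
    positivity
  set T : Finset n := Finset.univ.filter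
      (fun i => hH.eigenvalues i ∈ Set.Icc (E - η) (E + η)) with hT
  have hfT : ∀ i ∈ T, 1 / (2 * η) ≤ f i := by
    intro i hi
    rw [hT, Finset.mem_filter] at hi
    obtain ⟨-, h1, h2⟩ := hi
    have hb : (lam i - E) ^ 2 + η ^ 2 ≤ 2 * η * η := by
      have : (lam i - E) ^ 2 ≤ η ^ 2 := sq_le_sq' (by linarith) (by linarith)
      nlinarith
    rw [hf, div_le_div_iff₀ (by positivity) (by positivity)] at *
    nlinarith [hfpos i]
  -- key identity
  have key : (∑ i, f i) ^ 2 - ∑ i, (f i) ^ 2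
      = ∑ i, ∑ j ∈ Finset.univ.erase i, f i * f j := by
    have h1 : ∀ i : n, ∑ j ∈ Finset.univ.erase i, f i * f j
        = (∑ j, f i * f j) - f i * f i :=
      fun i => Finset.sum_erase_eq_sub (Finset.mem_univ i)
    calc (∑ i, f i) ^ 2 - ∑ i, (f i) ^ 2
        = ∑ i, ((∑ j, f i * f j) - f i * f i) := by
          rw [Finset.sum_sub_distrib, sq, Finset.sum_mul_sum]
          congr 1
          exact Finset.sum_congr rfl fun i _ => by rw [sq]
      _ = ∑ i, ∑ j ∈ Finset.univ.erase i, f i * f j :=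
          Finset.sum_congr rfl fun i _ => (h1 i).symm
  rw [key]
  -- LHS identity
  have hNT : N = T.card := hN
  have lhs_eq : (N : ℝ) ^ 2 - (N : ℝ) = ∑ i ∈ T, ∑ j ∈ T.erase i, (1 : ℝ) := by
    have h2 : ∀ i ∈ T, ∑ j ∈ T.erase i, (1 : ℝ) = (T.card : ℝ) - 1 := by
      intro i hi
      rw [Finset.sum_const, Finset.card_erase_of_mem hi, nsmul_eq_mul, mul_one,
        Nat.cast_sub (Finset.card_pos.mpr ⟨i, hi⟩), Nat.cast_one]
    rw [Finset.sum_congr rfl h2, Finset.sum_const, nsmul_eq_mul, hNT]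
    ring
  rw [lhs_eq, Finset.mul_sum]
  have step1 : ∑ i ∈ T, ∑ j ∈ T.erase i, (1 : ℝ)
      ≤ ∑ i ∈ T, ∑ j ∈ T.erase i, (2 * η) ^ 2 * (f i * f j) := by
    apply Finset.sum_le_sum
    intro i hi
    apply Finset.sum_le_sum
    intro j hj
    have hj' : j ∈ T := Finset.mem_of_mem_erase hj
    have h1 : 1 / (2 * η) ≤ f i := hfT i hi
    have h2 : 1 / (2 * η) ≤ f j := hfT j hj'
    have hpos : (0 : ℝ) < 1 / (2 * η) := by positivity
    have : (1 / (2 * η)) * (1 / (2 * η)) ≤ f i * f j :=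
      mul_le_mul h1 h2 (le_of_lt hpos) (le_of_lt (hfpos i))
    have hfin : (2 * η) ^ 2 * ((1 / (2 * η)) * (1 / (2 * η))) ≤ (2 * η) ^ 2 * (f i * f j) :=
      mul_le_mul_of_nonneg_left this (by positivity)
    have heq : (2 * η) ^ 2 * ((1 / (2 * η)) * (1 / (2 * η))) = 1 := by
      field_simp
    linarith
  have step2 : ∑ i ∈ T, ∑ j ∈ T.erase i, (2 * η) ^ 2 * (f i * f j)
      ≤ ∑ i, (2 * η) ^ 2 * ∑ j ∈ Finset.univ.erase i, f i * f j := by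
    have inner : ∀ i ∈ T, ∑ j ∈ T.erase i, (2 * η) ^ 2 * (f i * f j)
        ≤ (2 * η) ^ 2 * ∑ j ∈ Finset.univ.erase i, f i * f j := by
      intro i _
      rw [← Finset.mul_sum]
      apply mul_le_mul_of_nonneg_left _ (by positivity)
      apply Finset.sum_le_sum_of_subset_of_nonneg
      · exact Finset.erase_subset_erase i (Finset.subset_univ T)
      · intro j _ _
        exact le_of_lt (mul_pos (hfpos i) (hfpos j))
    calc ∑ i ∈ T, ∑ j ∈ T.erase i, (2 * η) ^ 2 * (f i * f j)
        ≤ ∑ i ∈ T, (2 * η) ^ 2 * ∑ j ∈ Finset.univ.erase i, f i * f j :=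
          Finset.sum_le_sum inner
      _ ≤ ∑ i, (2 * η) ^ 2 * ∑ j ∈ Finset.univ.erase i, f i * f j := by
          apply Finset.sum_le_sum_of_subset_of_nonneg (Finset.subset_univ T)
          intro i _ _
          apply mul_nonneg (by positivity)
          apply Finset.sum_nonneg
          intro j _
          exact le_of_lt (mul_pos (hfpos i) (hfpos j))
  linarith
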